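/- Let G be a finite group and let a : G → ℝ≥0 be a nonzero nonnegative function satisfying a * a = a (idempotent under convolution). Then the support of a is a subgroup H of G and a = (1/|H|)·1_H, the normalized indicator function of H. -/

import Mathlib

/-- Convolution of functions on a finite group. -/
noncomputable def conv {G : Type*} [Group G] [Fintype G] (f h : G → ℝ) : G → ℝ :=
  fun g => ∑ x : G, f x * h (x⁻¹ * g)

theorem idempotent_is_normalized_subgroup_indicator {G : Type*} [Group G] [Fintype G]
    (a : G → ℝ) (hpos : ∀ g, 0 ≤ a g) (hne : a ≠ 0) (hidem : conv a a = a) :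
    ∃ H : Subgroup G, (∀ g : G, a g ≠ 0 ↔ g ∈ H) ∧
      ∀ g ∈ H, a g = ((Nat.card H : ℝ))⁻¹ := by
  classical
  have hmul : ∀ g h : G, a g ≠ 0 → a h ≠ 0 → a (g * h) ≠ 0 := by
    intro g h hg hh
    have hterm : 0 < a g * a (g⁻¹ * (g * h)) := by
      rw [inv_mul_cancel_left]
      exact mul_pos ((hpos g).lt_of_ne' hg) ((hpos h).lt_of_ne' hh)
    have hle : a g * a (g⁻¹ * (g * h)) ≤ ∑ x : G, a x * a (x⁻¹ * (g * h)) :=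
      Finset.single_le_sum (f := fun x => a x * a (x⁻¹ * (g * h)))
        (fun x _ => mul_nonneg (hpos x) (hpos _)) (Finset.mem_univ g)
    have : conv a a (g * h) = a (g * h) := congrFun hidem (g * h)
    simp only [conv] at this
    nlinarith
  obtain ⟨g1, hg1⟩ : ∃ g, a g ≠ 0 := by
    by_contra h
    push_neg at h
    exact hne (funext fun g => h g)
  have hone : a 1 ≠ 0 := by
    have hpow : ∀ n : ℕ, a (g1 ^ (n + 1)) ≠ 0 := by
      intro n
      induction n with
      | zero => simpa using hg1
      | succ n ih => rw [pow_succ]; exact hmul _ _ ih hg1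
    have h := hpow (orderOf g1 - 1)
    rwa [Nat.sub_add_cancel (orderOf_pos g1), pow_orderOf_eq_one] at h
  have hpow : ∀ g : G, a g ≠ 0 → ∀ n : ℕ, a (g ^ n) ≠ 0 := by
    intro g hg n
    induction n with
    | zero => simpa using hone
    | succ n ih => rw [pow_succ]; exact hmul _ _ ih hg
  have hinv : ∀ g : G, a g ≠ 0 → a g⁻¹ ≠ 0 := by
    intro g hg
    have h := hpow g hg (orderOf g - 1)
    have hmul1 : g ^ (orderOf g - 1) * g = 1 := by
      rw [← pow_succ, Nat.sub_add_cancel (orderOf_pos g), pow_orderOf_eq_one]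
    rwa [eq_inv_of_mul_eq_one_left hmul1] at h
  set H : Subgroup G :=
    { carrier := {g | a g ≠ 0}
      mul_mem' := fun hg hh => hmul _ _ hg hh
      one_mem' := hone
      inv_mem' := fun hg => hinv _ hg } with hH
  refine ⟨H, fun g => Iff.rfl, ?_⟩
  -- total sum
  set T : ℝ := ∑ g : G, a g with hT
  have hTshift : ∀ x : G, ∑ g : G, a (x⁻¹ * g) = T := by
    intro x
    exact Fintype.sum_equiv (Equiv.mulLeft x⁻¹) _ _ (fun g => rfl)
  have hT2 : T * T = T := by
    calc T * T = ∑ x : G, a x * T := by rw [← Finset.sum_mul]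
    _ = ∑ x : G, ∑ g : G, a x * a (x⁻¹ * g) := by
        refine Finset.sum_congr rfl fun x _ => ?_
        rw [← Finset.mul_sum, hTshift x]
    _ = ∑ g : G, ∑ x : G, a x * a (x⁻¹ * g) := Finset.sum_comm
    _ = ∑ g : G, a g := Finset.sum_congr rfl fun g _ => congrFun hidem g
    _ = T := rfl
  have hTpos : 0 < T := by
    have : a g1 ≤ T := Finset.single_le_sum (fun x _ => hpos x) (Finset.mem_univ g1)
    have := (hpos g1).lt_of_ne' hg1
    linarith
  have hT1 : T = 1 := mul_left_cancel₀ hTpos.ne' (by linarith [hT2])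
  -- max
  obtain ⟨g0, _, hg0max⟩ := Finset.exists_max_image (Finset.univ : Finset G) a
    ⟨g1, Finset.mem_univ g1⟩
  set M : ℝ := a g0 with hM
  have hMpos : 0 < M := lt_of_lt_of_le ((hpos g1).lt_of_ne' hg1) (hg0max g1 (Finset.mem_univ g1))
  -- equality case of the sum
  have hsumM : ∑ x : G, a x * M = M := by
    rw [← Finset.sum_mul, ← hT, hT1, one_mul]
  have hsumeq : ∑ x : G, a x * a (x⁻¹ * g0) = ∑ x : G, a x * M := by
    rw [hsumM]
    exact congrFun hidem g0
  have hle : ∀ x ∈ (Finset.univ : Finset G), a x * a (x⁻¹ * g0) ≤ a x * M :=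
    fun x _ => mul_le_mul_of_nonneg_left (hg0max _ (Finset.mem_univ _)) (hpos x)
  have heach : ∀ x ∈ (Finset.univ : Finset G), a x * a (x⁻¹ * g0) = a x * M :=
    (Finset.sum_eq_sum_iff_of_le hle).mp hsumeq
  have hconst : ∀ g : G, a g ≠ 0 → a g = M := by
    intro g hg
    have hg0 : a g0 ≠ 0 := hMpos.ne'
    have hx : a (g0 * g⁻¹) ≠ 0 := hmul _ _ hg0 (hinv g hg)
    have h := heach (g0 * g⁻¹) (Finset.mem_univ _)
    have hcancel : (g0 * g⁻¹)⁻¹ * g0 = g := by group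
    rw [hcancel] at h
    exact mul_left_cancel₀ hx h
  -- cardinality
  set s : Finset G := Finset.univ.filter (fun g => a g ≠ 0) with hs
  have hcard : (Nat.card H : ℝ) = (s.card : ℝ) := by
    norm_cast
    have : (H : Set G) = ↑s := by
      ext g; simp [hs, hH]
    rw [show (Nat.card ↥H) = Nat.card (H : Set G) from rfl, Nat.card_coe_set_eq, this,
      Set.ncard_coe_finset]
  have hsumS : ∑ g ∈ s, a g = T := by
    rw [hT]
    exact Finset.sum_filter_ne_zero _
  have hMcard : (s.card : ℝ) * M = 1 := by
    have : ∑ g ∈ s, a g = (s.card : ℝ) * M := by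
      rw [Finset.sum_congr rfl (fun g hg => hconst g (Finset.mem_filter.mp hg).2)]
      rw [Finset.sum_const, nsmul_eq_mul]
    rw [hsumS, hT1] at this
    linarith
  intro g hg
  rw [hconst g hg, hcard]
  exact eq_inv_of_mul_eq_one_right hMcard
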